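/- Let G be a finite 3-pyramidal group that is generated by its involutions. Then G is isomorphic to the symmetric group S_3. -/

import Mathlib

section Aux
variable {G : Type*} [Group G]

/-- The conjugation permutation on the set of involutions. -/
def conjPerm (g : G) : Equiv.Perm {x : G | orderOf x = 2} where
  toFun x := ⟨g * x * g⁻¹, by
    have h : SemiconjBy g (x : G) (g * x * g⁻¹) := by
      unfold SemiconjBy; group
    have := h.orderOf_eq g
    simp only [Set.mem_setOf_eq] at *
    rw [← this]; exact x.2⟩
  invFun x := ⟨g⁻¹ * x * g, by
    have h : SemiconjBy g⁻¹ (x : G) (g⁻¹ * x * g) := by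
      unfold SemiconjBy; group
    have := h.orderOf_eq g⁻¹
    simp only [Set.mem_setOf_eq] at *
    rw [← this]; exact x.2⟩
  left_inv x := by ext; simp; group
  right_inv x := by ext; simp; group

def conjHom (G : Type*) [Group G] : G →* Equiv.Perm {x : G | orderOf x = 2} where
  toFun := conjPerm
  map_one' := by ext x; simp [conjPerm]
  map_mul' g h := by ext x; simp [conjPerm]; group

theorem conjPerm_apply (g : G) (x : {x : G | orderOf x = 2}) :
    (conjPerm g x : G) = g * x * g⁻¹ := rfl

/-- `permCongr` as a `MulEquiv`. -/
def permCongrMulEquiv {α β : Type*} (e : α ≃ β) : Equiv.Perm α ≃* Equiv.Perm β :=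
  { e.permCongr with
    map_mul' := fun p q => by ext x; simp }

lemma dihedral_form {a t : G} (ha : a * a = 1)
    (hat : ∀ k : ℤ, a * t ^ k = t ^ (-k) * a) {x : G}
    (hx : x ∈ Subgroup.closure ({a, t} : Set G)) :
    ∃ k : ℤ, x = t ^ k ∨ x = t ^ k * a := by
  have hainv : a⁻¹ = a := inv_eq_of_mul_eq_one_right ha
  induction hx using Subgroup.closure_induction with
  | mem y hy =>
      rcases hy with rfl | rfl
      · exact ⟨0, Or.inr (by simp)⟩
      · exact ⟨1, Or.inl (by simp)⟩
  | one => exact ⟨0, Or.inl (by simp)⟩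
  | mul x y hx hy ihx ihy =>
      obtain ⟨j, rfl | rfl⟩ := ihx <;> obtain ⟨k, rfl | rfl⟩ := ihy
      · exact ⟨j + k, Or.inl (by rw [zpow_add])⟩
      · exact ⟨j + k, Or.inr (by rw [← mul_assoc, ← zpow_add])⟩
      · refine ⟨j + -k, Or.inr ?_⟩
        rw [mul_assoc, hat, ← mul_assoc, ← zpow_add]
      · refine ⟨j + -k, Or.inl ?_⟩
        rw [mul_assoc, ← mul_assoc a, hat, mul_assoc, ha, mul_one, ← zpow_add]
  | inv x hx ihx =>
      obtain ⟨j, rfl | rfl⟩ := ihx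
      · exact ⟨-j, Or.inl (by rw [zpow_neg])⟩
      · refine ⟨j, Or.inr ?_⟩
        rw [mul_inv_rev, hainv, ← zpow_neg, hat, neg_neg]

end Aux

/-- A finite group is 3-pyramidal if it has exactly three involutions,
which are all conjugate to each other. -/
def IsThreePyramidal (G : Type*) [Group G] : Prop :=
  Nat.card {g : G | orderOf g = 2} = 3 ∧
    ∀ i j : G, orderOf i = 2 → orderOf j = 2 → IsConj i j

theorem stmt_5 {G : Type*} [Group G] [Finite G] (hG : IsThreePyramidal G)
    (hgen : Subgroup.closure {g : G | orderOf g = 2} = ⊤) :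
    Nonempty (G ≃* Equiv.Perm (Fin 3)) := by
  classical
  obtain ⟨hcard, hconj⟩ := hG
  set S : Set G := {g : G | orderOf g = 2} with hSdef
  have hSfin : S.Finite := Set.toFinite S
  have hncard : S.ncard = 3 := by rw [← Nat.card_coe_set_eq]; exact hcard
  have hsq : ∀ x ∈ S, x * x = 1 := by
    intro x hx
    have h := pow_orderOf_eq_one x
    rw [show orderOf x = 2 from hx] at h
    rwa [pow_two] at h
  have hne1 : ∀ x ∈ S, x ≠ 1 := by
    intro x hx h1
    have : orderOf x = 2 := hx
    rw [h1, orderOf_one] at this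
    omega
  have hmemS : ∀ x : G, x * x = 1 → x ≠ 1 → x ∈ S := fun x h h1 =>
    show orderOf x = 2 from orderOf_eq_prime (by rwa [pow_two]) h1
  obtain ⟨a, b, haS, hbS, hab⟩ := (Set.one_lt_ncard_iff hSfin).mp (by omega)
  have ha2 : a * a = 1 := hsq a haS
  have hb2 : b * b = 1 := hsq b hbS
  have hainv : a⁻¹ = a := inv_eq_of_mul_eq_one_right ha2
  have hbinv : b⁻¹ = b := inv_eq_of_mul_eq_one_right hb2
  -- distinct involutions do not commute
  have hnc : a * b ≠ b * a := by
    intro hcomm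
    have habne : a * b ≠ 1 := by
      intro h
      exact hab (by rw [mul_eq_one_iff_eq_inv.mp h, hbinv])
    have habS : a * b ∈ S := by
      refine hmemS _ ?_ habne
      rw [mul_assoc, ← mul_assoc b, ← hcomm, mul_assoc, hb2, mul_one, ha2]
    have hd1 : a ≠ a * b := fun h => hne1 b hbS (left_eq_mul.mp h)
    have hd2 : b ≠ a * b := fun h => hne1 a haS (right_eq_mul.mp h)
    have htriple : ({a, b, a * b} : Set G).ncard = 3 :=
      Set.ncard_eq_three.mpr ⟨a, b, a * b, hab, hd1, hd2, rfl⟩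
    have hsub : ({a, b, a * b} : Set G) ⊆ S := by
      intro x hx
      simp only [Set.mem_insert_iff, Set.mem_singleton_iff] at hx
      rcases hx with rfl | rfl | rfl
      exacts [haS, hbS, habS]
    have hSeq : S = {a, b, a * b} :=
      (Set.eq_of_subset_of_ncard_le hsub (by rw [hncard, htriple]) hSfin).symm
    have hcommS : ∀ x ∈ S, ∀ y ∈ S, Commute x y := by
      have c1 : Commute a b := hcomm
      intro x hx y hy
      rw [hSeq] at hx hy
      simp only [Set.mem_insert_iff, Set.mem_singleton_iff] at hx hy
      rcases hx with rfl | rfl | rfl <;> rcases hy with rfl | rfl | rfl <;>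
        first
          | exact Commute.refl _
          | exact c1
          | exact c1.symm
          | exact (Commute.refl _).mul_right c1
          | exact c1.symm.mul_right (Commute.refl _)
          | exact ((Commute.refl _).mul_right c1).symm
          | exact (c1.symm.mul_right (Commute.refl _)).symm
    have hcent : ∀ g : G, ∀ x ∈ S, x * g = g * x := by
      have hle : Subgroup.closure S ≤ Subgroup.centralizer S :=
        (Subgroup.closure_le _).mpr fun y hy =>
          Subgroup.mem_centralizer_iff.mpr fun x hx => hcommS x hx y hy
      intro g x hx
      have hg : g ∈ Subgroup.centralizer S := hle (by rw [hgen]; trivial)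
      exact Subgroup.mem_centralizer_iff.mp hg x hx
    obtain ⟨c, hc⟩ := isConj_iff.mp (hconj a b haS hbS)
    apply hab
    have hac := hcent c a haS
    rw [← hc, ← hac, mul_assoc, mul_inv_cancel, mul_one]
  obtain ⟨t, htdef⟩ : ∃ t : G, t = a * b := ⟨a * b, rfl⟩
  have ht1 : t ≠ 1 := by
    intro h
    rw [htdef] at h
    exact hab (by rw [mul_eq_one_iff_eq_inv.mp h, hbinv])
  have ht2 : t * t ≠ 1 := by
    intro h
    apply hnc
    have h1 : t⁻¹ = t := inv_eq_of_mul_eq_one_right h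
    calc a * b = t := htdef.symm
      _ = t⁻¹ := h1.symm
      _ = b⁻¹ * a⁻¹ := by rw [htdef, mul_inv_rev]
      _ = b * a := by rw [hainv, hbinv]
  have hconjt : a * t * a⁻¹ = t⁻¹ := by
    rw [htdef, hainv, mul_inv_rev, hainv, hbinv, ← mul_assoc, ha2, one_mul]
  have hat : ∀ k : ℤ, a * t ^ k = t ^ (-k) * a := by
    intro k
    have h1 : (a * t * a⁻¹) ^ k = a * t ^ k * a⁻¹ := conj_zpow
    rw [hconjt, inv_zpow', hainv] at h1
    calc a * t ^ k = a * t ^ k * a * a := by rw [mul_assoc, ha2, mul_one]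
      _ = t ^ (-k) * a := by rw [← h1]
  have hanpow : ∀ k : ℤ, a ≠ t ^ k := by
    intro k h
    have h1 := hat 1
    rw [zpow_one] at h1
    have h2 : a * t = t * a := by
      rw [h, ← zpow_add_one, ← zpow_one_add, add_comm]
    rw [h2] at h1
    have h3 : t = t ^ (-1 : ℤ) := mul_right_cancel h1
    apply ht2
    rw [zpow_neg_one] at h3
    exact mul_eq_one_iff_eq_inv.mpr h3
  have hSinv : ∀ k : ℤ, t ^ k * a ∈ S := by
    intro k
    refine hmemS _ ?_ ?_
    · rw [mul_assoc, ← mul_assoc a, hat, mul_assoc, ha2, mul_one, ← zpow_add,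
        add_neg_cancel, zpow_zero]
    · intro h
      refine hanpow (-k) ?_
      rw [zpow_neg, ← mul_eq_one_iff_inv_eq.mp h]
  have e1 : t * a ∈ S := by have := hSinv 1; rwa [zpow_one] at this
  have ht2' : (t : G) ^ (2 : ℤ) = t * t := by
    rw [show (2 : ℤ) = 1 + 1 by norm_num, zpow_add, zpow_one]
  have ht3' : (t : G) ^ (3 : ℤ) = t * (t * t) := by
    rw [show (3 : ℤ) = 1 + (1 + 1) by norm_num, zpow_add, zpow_add, zpow_one]
  have e2 : t * (t * a) ∈ S := by
    have := hSinv 2; rwa [ht2', mul_assoc] at this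
  have d1 : a ≠ t * a := fun h => ht1 (right_eq_mul.mp h)
  have d2 : a ≠ t * (t * a) := fun h => ht2 (by rw [← mul_assoc] at h; exact right_eq_mul.mp h)
  have d3 : t * a ≠ t * (t * a) := fun h => ht1 (by
    have := mul_left_cancel h
    exact (mul_eq_right).mp this.symm)
  have hSeq : S = {a, t * a, t * (t * a)} := by
    refine (Set.eq_of_subset_of_ncard_le ?_ ?_ hSfin).symm
    · intro x hx
      simp only [Set.mem_insert_iff, Set.mem_singleton_iff] at hx
      rcases hx with rfl | rfl | rfl
      exacts [haS, e1, e2]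
    · rw [hncard, Set.ncard_eq_three.mpr ⟨a, t * a, t * (t * a), d1, d2, d3, rfl⟩]
  have htt : t * (t * t) = 1 := by
    have ht3 : t * (t * (t * a)) ∈ S := by
      have := hSinv 3; rwa [ht3', mul_assoc, mul_assoc] at this
    rw [hSeq] at ht3
    simp only [Set.mem_insert_iff, Set.mem_singleton_iff] at ht3
    rcases ht3 with h | h | h
    · have h' : (t * (t * t)) * a = 1 * a := by
        rw [one_mul, mul_assoc, mul_assoc]; exact h
      exact mul_right_cancel h'
    · exfalso
      apply ht2
      have h1 := mul_left_cancel h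
      have h' : (t * t) * a = 1 * a := by rw [one_mul, mul_assoc]; exact h1
      exact mul_right_cancel h'
    · exfalso
      apply ht1
      have h1 := mul_left_cancel (mul_left_cancel h)
      exact mul_eq_right.mp h1
  haveI : Fact (Nat.Prime 3) := ⟨by norm_num⟩
  have horder : orderOf t = 3 :=
    orderOf_eq_prime (by rw [pow_succ, pow_two, mul_assoc]; exact htt) ht1
  have hcl : ∀ x : G, x ∈ Subgroup.closure ({a, t} : Set G) := by
    have hma : a ∈ Subgroup.closure ({a, t} : Set G) := Subgroup.subset_closure (by simp)
    have hmt : t ∈ Subgroup.closure ({a, t} : Set G) := Subgroup.subset_closure (by simp)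
    have hsub : S ⊆ ↑(Subgroup.closure ({a, t} : Set G)) := by
      rw [hSeq]
      intro x hx
      simp only [Set.mem_insert_iff, Set.mem_singleton_iff] at hx
      rcases hx with rfl | rfl | rfl
      · exact hma
      · exact mul_mem hmt hma
      · exact mul_mem hmt (mul_mem hmt hma)
    have hle : Subgroup.closure S ≤ Subgroup.closure ({a, t} : Set G) :=
      (Subgroup.closure_le _).mpr hsub
    rw [hgen] at hle
    intro x
    exact hle trivial
  have hform : ∀ x : G, ∃ k : ℤ, x = t ^ k ∨ x = t ^ k * a := fun x =>
    dihedral_form ha2 hat (hcl x)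
  have hpowinj : ∀ j k : ℤ, t ^ j = t ^ k → (3 : ℤ) ∣ j - k := by
    intro j k h
    have h1 : t ^ (j - k) = 1 := by rw [zpow_sub, h, mul_inv_cancel]
    have h2 := orderOf_dvd_iff_zpow_eq_one.mpr h1
    rwa [horder] at h2
  -- cardinality of G is 6
  have hz3 : (t : G) ^ (3 : ℤ) = 1 := by rw [ht3']; exact htt
  have hf : Function.Bijective
      (fun p : Fin 3 × Fin 2 => t ^ ((p.1 : ℕ) : ℤ) * a ^ ((p.2 : ℕ) : ℤ)) := by
    constructor
    · rintro ⟨i, d⟩ ⟨j, e⟩ h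
      simp only at h
      have hmain : ∀ u v : ℤ, t ^ u = t ^ v → -3 < u - v → u - v < 3 → u = v := by
        intro u v huv h1 h2
        have := hpowinj u v huv
        omega
      fin_cases d <;> fin_cases e <;>
        simp only [Fin.isValue, Fin.val_zero, Fin.val_one, Nat.cast_zero, Nat.cast_one,
          zpow_zero, zpow_one, mul_one] at h ⊢
      · have := hmain _ _ h (by omega) (by omega)
        exact Prod.ext (Fin.ext (by exact_mod_cast this)) rfl
      · exfalso
        apply hanpow (((i : ℕ) : ℤ) - ((j : ℕ) : ℤ))
        have hz : t ^ (((i : ℕ) : ℤ) - ((j : ℕ) : ℤ))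
            = (t ^ ((j : ℕ) : ℤ))⁻¹ * t ^ ((i : ℕ) : ℤ) := by
          rw [sub_eq_neg_add, zpow_add, zpow_neg]
        rw [hz, h, ← mul_assoc, inv_mul_cancel, one_mul]
      · exfalso
        apply hanpow (((j : ℕ) : ℤ) - ((i : ℕ) : ℤ))
        have hz : t ^ (((j : ℕ) : ℤ) - ((i : ℕ) : ℤ))
            = (t ^ ((i : ℕ) : ℤ))⁻¹ * t ^ ((j : ℕ) : ℤ) := by
          rw [sub_eq_neg_add, zpow_add, zpow_neg]
        rw [hz, ← h, ← mul_assoc, inv_mul_cancel, one_mul]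
      · have h' : t ^ ((i : ℕ) : ℤ) = t ^ ((j : ℕ) : ℤ) := mul_right_cancel h
        have := hmain _ _ h' (by omega) (by omega)
        exact Prod.ext (Fin.ext (by exact_mod_cast this)) rfl
    · intro x
      have key : ∀ k : ℤ, ∃ m : Fin 3, t ^ ((m : ℕ) : ℤ) = t ^ k := by
        intro k
        have h0 : (0 : ℤ) ≤ k % 3 := Int.emod_nonneg k (by norm_num)
        have h3 : k % 3 < 3 := Int.emod_lt_of_pos k (by norm_num)
        refine ⟨⟨(k % 3).toNat, by omega⟩, ?_⟩
        have hmod := zpow_mod_orderOf t k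
        rw [horder] at hmod
        have hcast : (((k % 3).toNat : ℕ) : ℤ) = k % ((3 : ℕ) : ℤ) := by
          rw [Int.toNat_of_nonneg h0]; norm_num
        rw [hcast]
        exact hmod
      obtain ⟨k, hk | hk⟩ := hform x
      · obtain ⟨m, hm⟩ := key k
        exact ⟨(m, 0), by simp only [Fin.val_zero, Nat.cast_zero, zpow_zero, mul_one,
          hm, hk]⟩
      · obtain ⟨m, hm⟩ := key k
        exact ⟨(m, 1), by simp only [Fin.val_one, Nat.cast_one, zpow_one, hm, hk]⟩
  have hcardG : Nat.card G = 6 := by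
    have h6 := Nat.card_eq_of_bijective _ hf
    rw [← h6]
    simp [Nat.card_eq_fintype_card]
  -- the conjugation homomorphism is injective
  have hinj : Function.Injective (conjHom G) := by
    refine (injective_iff_map_eq_one (conjHom G)).mpr ?_
    intro g hg
    have hfix : ∀ x : G, ∀ hx : x ∈ S, g * x * g⁻¹ = x := by
      intro x hx
      have h1 : conjPerm g ⟨x, hx⟩ = (⟨x, hx⟩ : {x : G | orderOf x = 2}) := by
        have : conjHom G g = 1 := hg
        rw [show conjPerm g = conjHom G g from rfl, this]
        rfl
      exact congrArg Subtype.val h1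
    have hga : g * a = a * g := by
      have := hfix a haS
      rwa [mul_inv_eq_iff_eq_mul] at this
    have hgta : g * (t * a) = (t * a) * g := by
      have := hfix _ e1
      rwa [mul_inv_eq_iff_eq_mul] at this
    have hgt : g * t = t * g := by
      have h1 : (g * t) * a = (t * g) * a := by
        calc (g * t) * a = g * (t * a) := by rw [mul_assoc]
          _ = (t * a) * g := hgta
          _ = t * (a * g) := by rw [mul_assoc]
          _ = t * (g * a) := by rw [← hga]
          _ = (t * g) * a := by rw [mul_assoc]
      exact mul_right_cancel h1
    obtain ⟨k, hk | hk⟩ := hform g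
    · subst hk
      have h1 : t ^ k * a = t ^ (-k) * a := by
        calc t ^ k * a = a * t ^ k := hga
          _ = t ^ (-k) * a := hat k
      have h2 : t ^ k = t ^ (-k) := mul_right_cancel h1
      have h3 := hpowinj k (-k) h2
      have h4 : (3 : ℤ) ∣ k := by omega
      obtain ⟨m, rfl⟩ := h4
      rw [zpow_mul, hz3, one_zpow]
    · exfalso
      subst hk
      have h1 : t ^ (k + -1) * a = t ^ (1 + k) * a := by
        calc t ^ (k + -1) * a = t ^ k * (t ^ (-1 : ℤ) * a) := by
              rw [← mul_assoc, ← zpow_add]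
          _ = t ^ k * (a * t ^ (1 : ℤ)) := by rw [hat]
          _ = (t ^ k * a) * t := by rw [zpow_one, ← mul_assoc]
          _ = t * (t ^ k * a) := hgt
          _ = t ^ (1 : ℤ) * t ^ k * a := by rw [zpow_one, mul_assoc]
          _ = t ^ (1 + k) * a := by rw [← zpow_add]
      have h2 := hpowinj _ _ (mul_right_cancel h1)
      omega
  -- assemble the isomorphism
  have hScard : Nat.card {x : G | orderOf x = 2} = 3 := hcard
  let e : {x : G | orderOf x = 2} ≃ Fin 3 := Finite.equivFinOfCardEq hScard
  let ψ : G →* Equiv.Perm (Fin 3) :=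
    (permCongrMulEquiv e).toMonoidHom.comp (conjHom G)
  have hψinj : Function.Injective ψ :=
    (permCongrMulEquiv e).injective.comp hinj
  have hψbij : Function.Bijective ψ := by
    refine (Nat.bijective_iff_injective_and_card ψ).mpr ⟨hψinj, ?_⟩
    rw [hcardG, Nat.card_eq_fintype_card, Fintype.card_perm]
    decide
  exact ⟨MulEquiv.ofBijective ψ hψbij⟩
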